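/- Let A be an n×n real matrix all of whose diagonal entries are nonzero, satisfying the inverse cyclic property. Then det(A) = (d - c)^{n-1} / d^{n-2}, where d = a_{11}a_{22}⋯a_{nn} is the product of the diagonal entries and c = a_{12}a_{23}⋯a_{(n-1)n}a_{n1} is the cyclic product. -/

import Mathlib

open Matrix Finset

/-- A matrix (of order ≥ 2) has the *inverse cyclic property* if all its diagonal
entries are nonzero and the three cyclic entry conditions hold. -/
def InvCyclic {n : ℕ} (A : Matrix (Fin (n + 2)) (Fin (n + 2)) ℝ) : Prop :=
  (∀ i, A i i ≠ 0) ∧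
  (∀ i k j : Fin (n + 2), i < k → k < j → A i j = A i k * A k j / A k k) ∧
  (∀ i j : Fin (n + 2), j < i → i ≠ Fin.last (n + 1) →
    A i j = A i (Fin.last (n + 1)) * A (Fin.last (n + 1)) j /
      A (Fin.last (n + 1)) (Fin.last (n + 1))) ∧
  (∀ j : Fin (n + 2), j < Fin.last (n + 1) →
    A (Fin.last (n + 1)) j = A (Fin.last (n + 1)) 0 * A 0 j / A 0 0)

/-- `d`, the product of the diagonal entries. -/
def diagProd {n : ℕ} (A : Matrix (Fin (n + 2)) (Fin (n + 2)) ℝ) : ℝ := ∏ i, A i i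

/-- `c`, the cyclic product `a₁₂a₂₃⋯a_{(n-1)n}a_{n1}`. -/
def cycProd {n : ℕ} (A : Matrix (Fin (n + 2)) (Fin (n + 2)) ℝ) : ℝ :=
  ∏ i : Fin (n + 2), A i (i + 1)

open Fin.NatCast

namespace ICP

variable {n : ℕ} (A : Matrix (Fin (n + 2)) (Fin (n + 2)) ℝ)

/-- diagonal entries, indexed by ℕ -/
def da (t : ℕ) : ℝ := A (t : Fin (n + 2)) (t : Fin (n + 2))

/-- superdiagonal (cyclic) entries, indexed by ℕ -/
def ba (t : ℕ) : ℝ := A (t : Fin (n + 2)) ((t + 1 : ℕ) : Fin (n + 2))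

lemma castLt {a b : ℕ} (h : a < b) (hb : b < n + 2) :
    ((a : Fin (n + 2))) < ((b : Fin (n + 2))) := by
  rw [Fin.lt_def, Fin.val_cast_of_lt (by omega), Fin.val_cast_of_lt hb]; exact h

lemma da_ne (hA : InvCyclic A) (t : ℕ) : da A t ≠ 0 := hA.1 _

lemma prod_da_ne (hA : InvCyclic A) (s : Finset ℕ) : (∏ t ∈ s, da A t) ≠ 0 :=
  Finset.prod_ne_zero_iff.mpr fun t _ => da_ne A hA t

lemma upper (hA : InvCyclic A) : ∀ j i : ℕ, i < j → j < n + 2 →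
    A (i : Fin (n + 2)) (j : Fin (n + 2)) * ∏ t ∈ Ico (i + 1) j, da A t
      = ∏ t ∈ Ico i j, ba A t := by
  intro j
  induction j with
  | zero => omega
  | succ j ih =>
    intro i hij hj
    rcases eq_or_lt_of_le (Nat.lt_succ_iff.mp hij) with h | h
    · subst h
      rw [Finset.Ico_self, Finset.Ico_add_one_right_eq_Icc, Finset.Icc_self, Finset.prod_singleton,
        Finset.prod_empty, mul_one]
      rfl
    · have h1 : A (i : Fin (n + 2)) ((j + 1 : ℕ) : Fin (n + 2))
          = A i j * A (j : Fin (n + 2)) ((j + 1 : ℕ) : Fin (n + 2)) / A j j :=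
        hA.2.1 _ _ _ (castLt h (by omega)) (castLt (Nat.lt_succ_self j) hj)
      have key := ih i h (by omega)
      have hd : da A j ≠ 0 := da_ne A hA j
      rw [Finset.prod_Ico_succ_top (by omega : i + 1 ≤ j), Finset.prod_Ico_succ_top (by omega : i ≤ j),
        h1, ← key]
      show A _ _ * ba A j / da A j * (_ * da A j) = _
      field_simp

lemma lastRow (hA : InvCyclic A) (j : ℕ) (hj : j < n + 1) :
    A (Fin.last (n + 1)) (j : Fin (n + 2)) * da A 0
      = ba A (n + 1) * A ((0 : ℕ) : Fin (n + 2)) (j : Fin (n + 2)) := by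
  have hjl : (j : Fin (n + 2)) < Fin.last (n + 1) := by
    rw [Fin.lt_def, Fin.val_cast_of_lt (by omega)]; simpa using hj
  have h := hA.2.2.2 _ hjl
  have hb : ba A (n + 1) = A (Fin.last (n + 1)) 0 := by
    show A _ _ = _
    rw [Fin.natCast_eq_last]
    congr 1
    simp [Fin.ext_iff]
  have hd : da A 0 = A 0 0 := by simp [da]
  have h0 : A (0 : Fin (n+2)) 0 ≠ 0 := hA.1 0
  rw [h, hb, hd]
  have : ((0:ℕ) : Fin (n+2)) = 0 := by simp
  rw [this]
  field_simp

lemma key (hA : InvCyclic A) (i : ℕ) (hi : i + 1 < n + 2) :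
    ba A i * A ((i + 1 : ℕ) : Fin (n + 2)) ((i : ℕ) : Fin (n + 2))
        * ∏ t ∈ range (n + 2), da A t
      = da A i * da A (i + 1) * ∏ t ∈ range (n + 2), ba A t := by
  have hlast : ((n + 1 : ℕ) : Fin (n + 2)) = Fin.last (n + 1) := Fin.natCast_eq_last _
  have h1 := lastRow A hA i (by omega)
  rw [← hlast] at h1
  rcases eq_or_lt_of_le (Nat.lt_succ_iff.mp hi) with hcase | hcase
  · -- i + 1 = n + 1, i.e. i = n
    have hn : n = i := by omega
    subst hn
    rcases Nat.eq_zero_or_pos n with h0 | h0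
    · -- n = 0
      subst h0
      have e0 : A ((0 : ℕ) : Fin 2) ((0 : ℕ) : Fin 2) = da A 0 := rfl
      rw [e0] at h1
      have h1' : A ((1 : ℕ) : Fin 2) ((0 : ℕ) : Fin 2) = ba A 1 := by
        have := da_ne A hA 0
        field_simp at h1
        exact h1
      norm_num at h1' ⊢
      rw [h1']
      simp [Finset.prod_range_succ]
      ring
    · -- n ≥ 1
      have h2 := upper A hA n 0 h0 (by omega)
      have hsplitd : ∏ t ∈ range (n + 2), da A t
          = ((da A 0 * ∏ t ∈ Ico 1 n, da A t) * da A n) * da A (n + 1) := by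
        rw [prod_range_succ, prod_range_succ, Finset.range_eq_Ico,
          Finset.prod_eq_prod_Ico_succ_bot h0]
      have hsplitc : ∏ t ∈ range (n + 2), ba A t
          = ((∏ t ∈ Ico 0 n, ba A t) * ba A n) * ba A (n + 1) := by
        rw [prod_range_succ, prod_range_succ, Finset.range_eq_Ico]
      rw [hsplitd, hsplitc]
      linear_combination (ba A n * da A n * da A (n + 1) * (∏ t ∈ Ico 1 n, da A t)) * h1
        + (ba A n * da A n * da A (n + 1) * ba A (n + 1)) * h2
  · -- i + 1 < n + 1
    have hne : ((i + 1 : ℕ) : Fin (n + 2)) ≠ Fin.last (n + 1) := by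
      rw [← hlast]
      intro h
      have := congrArg Fin.val h
      rw [Fin.val_cast_of_lt (by omega), Fin.val_cast_of_lt (by omega)] at this
      omega
    have h3 := hA.2.2.1 ((i + 1 : ℕ) : Fin (n + 2)) ((i : ℕ) : Fin (n + 2))
      (castLt (Nat.lt_succ_self i) hi) hne
    rw [← hlast] at h3
    have h4 := upper A hA (n + 1) (i + 1) hcase (by omega)
    have hAll : A ((n + 1 : ℕ) : Fin (n + 2)) ((n + 1 : ℕ) : Fin (n + 2)) = da A (n + 1) := rfl
    have hdn1 : da A (n + 1) ≠ 0 := da_ne A hA (n + 1)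
    have hd0 : da A 0 ≠ 0 := da_ne A hA 0
    have hP1 : (∏ t ∈ Ico (i + 2) (n + 1), da A t) ≠ 0 := prod_da_ne A hA _
    have e4 : A ((i + 1 : ℕ) : Fin (n + 2)) ((n + 1 : ℕ) : Fin (n + 2))
        = (∏ t ∈ Ico (i + 1) (n + 1), ba A t) / (∏ t ∈ Ico (i + 2) (n + 1), da A t) :=
      (eq_div_iff hP1).mpr h4
    have e1 : A ((n + 1 : ℕ) : Fin (n + 2)) ((i : ℕ) : Fin (n + 2))
        = ba A (n + 1) * A ((0 : ℕ) : Fin (n + 2)) ((i : ℕ) : Fin (n + 2)) / da A 0 :=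
      (eq_div_iff hd0).mpr h1
    rcases Nat.eq_zero_or_pos i with h0 | h0
    · -- i = 0
      subst h0
      have e0 : A ((0 : ℕ) : Fin (n + 2)) ((0 : ℕ) : Fin (n + 2)) = da A 0 := rfl
      rw [e0] at e1
      have hsplitd : ∏ t ∈ range (n + 2), da A t
          = da A 0 * da A 1 * (∏ t ∈ Ico (0 + 2) (n + 1), da A t) * da A (n + 1) := by
        rw [prod_range_succ, Finset.range_eq_Ico,
          ← Finset.prod_Ico_consecutive (da A) (by omega : 0 ≤ 0 + 2) (by omega : 0 + 2 ≤ n + 1),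
          Finset.prod_Ico_succ_top (by omega : 0 ≤ 0 + 1),
          Finset.prod_Ico_succ_top (by omega : 0 ≤ 0)]
        simp
      have hsplitc : ∏ t ∈ range (n + 2), ba A t
          = ba A 0 * (∏ t ∈ Ico (0 + 1) (n + 1), ba A t) * ba A (n + 1) := by
        rw [prod_range_succ, Finset.range_eq_Ico,
          Finset.prod_eq_prod_Ico_succ_bot (by omega : 0 < n + 1)]
      rw [h3, hAll, e4, e1, hsplitd, hsplitc]
      have : da A (0 + 1) = da A 1 := by norm_num
      rw [this]
      field_simp
    · -- i ≥ 1
      have hQ1 : (∏ t ∈ Ico 1 i, da A t) ≠ 0 := prod_da_ne A hA _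
      have e0 : A ((0 : ℕ) : Fin (n + 2)) ((i : ℕ) : Fin (n + 2))
          = (∏ t ∈ Ico 0 i, ba A t) / (∏ t ∈ Ico 1 i, da A t) :=
        (eq_div_iff hQ1).mpr (upper A hA i 0 h0 (by omega))
      have hsplitd : ∏ t ∈ range (n + 2), da A t
          = (da A 0 * ∏ t ∈ Ico 1 i, da A t) * da A i * da A (i + 1)
            * (∏ t ∈ Ico (i + 2) (n + 1), da A t) * da A (n + 1) := by
        rw [prod_range_succ, Finset.range_eq_Ico,
          ← Finset.prod_Ico_consecutive (da A) (by omega : 0 ≤ i + 2) (by omega : i + 2 ≤ n + 1),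
          Finset.prod_Ico_succ_top (by omega : 0 ≤ i + 1),
          Finset.prod_Ico_succ_top (by omega : 0 ≤ i),
          Finset.prod_eq_prod_Ico_succ_bot h0]
      have hsplitc : ∏ t ∈ range (n + 2), ba A t
          = (∏ t ∈ Ico 0 i, ba A t) * ba A i * (∏ t ∈ Ico (i + 1) (n + 1), ba A t)
            * ba A (n + 1) := by
        rw [prod_range_succ, Finset.range_eq_Ico,
          ← Finset.prod_Ico_consecutive (ba A) (by omega : 0 ≤ i + 1) (by omega : i + 1 ≤ n + 1),
          Finset.prod_Ico_succ_top (by omega : 0 ≤ i)]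
      rw [h3, hAll, e4, e1, e0, hsplitd, hsplitc]
      field_simp

/-- the row-reduced matrix -/
noncomputable def Mm : Matrix (Fin (n + 2)) (Fin (n + 2)) ℝ := fun i j =>
  if i.val < n + 1 then
    A i j - ba A i.val / da A (i.val + 1) * A ((i.val + 1 : ℕ) : Fin (n + 2)) j
  else A i j

/-- sequence of row operations -/
noncomputable def seq (k : ℕ) : Matrix (Fin (n + 2)) (Fin (n + 2)) ℝ :=
  Nat.rec A (fun k M => updateRow M ((k : ℕ) : Fin (n + 2))
      (M ((k : ℕ) : Fin (n + 2))
        + (-(ba A k / da A (k + 1))) • M ((k + 1 : ℕ) : Fin (n + 2)))) k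

lemma seq_succ (k : ℕ) : seq A (k + 1) = updateRow (seq A k) ((k : ℕ) : Fin (n + 2))
      (seq A k ((k : ℕ) : Fin (n + 2))
        + (-(ba A k / da A (k + 1))) • seq A k ((k + 1 : ℕ) : Fin (n + 2))) := rfl

lemma seq_det : ∀ k, k ≤ n + 1 → (seq A k).det = A.det := by
  intro k
  induction k with
  | zero => intro _; rfl
  | succ k ih =>
    intro hk
    rw [seq_succ, det_updateRow_add_smul_self _ ?_ _, ih (by omega)]
    intro h
    have := congrArg Fin.val h
    rw [Fin.val_cast_of_lt (by omega), Fin.val_cast_of_lt (by omega)] at this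
    omega

lemma seq_apply : ∀ k, k ≤ n + 1 → ∀ i j,
    seq A k i j = if i.val < k then Mm A i j else A i j := by
  intro k
  induction k with
  | zero => intro _ i j; simp [seq]
  | succ k ih =>
    intro hk i j
    have hk2 : k < n + 2 := by omega
    have hk12 : k + 1 < n + 2 := by omega
    rw [seq_succ, updateRow_apply]
    by_cases hik : i = ((k : ℕ) : Fin (n + 2))
    · rw [if_pos hik]
      have hv : i.val = k := by rw [hik, Fin.val_cast_of_lt hk2]
      rw [Pi.add_apply, Pi.smul_apply, smul_eq_mul,
        ih (by omega) _ j, ih (by omega) _ j]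
      rw [Fin.val_cast_of_lt hk2, Fin.val_cast_of_lt hk12]
      rw [if_neg (by omega), if_neg (by omega), if_pos (by omega)]
      rw [Mm, if_pos (by omega : i.val < n + 1)]
      rw [hv, hik]
      ring
    · rw [if_neg hik, ih (by omega) i j]
      have hvk : i.val ≠ k := fun h => hik (by
        apply Fin.ext; rw [Fin.val_cast_of_lt hk2, h])
      by_cases h' : i.val < k
      · rw [if_pos h', if_pos (by omega)]
      · rw [if_neg h', if_neg (by omega)]

lemma seq_eq_Mm : seq A (n + 1) = Mm A := by
  funext i j
  rw [seq_apply A (n + 1) le_rfl i j]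
  by_cases h : i.val < n + 1
  · rw [if_pos h]
  · rw [if_neg h, Mm, if_neg h]

lemma Mm_triangular (hA : InvCyclic A) : (Mm A).BlockTriangular OrderDual.toDual := by
  intro i j hij
  have hij' : i < j := hij
  have hiv : i.val < n + 1 := by have := hij'; rw [Fin.lt_def] at this; omega
  have hd : da A (i.val + 1) ≠ 0 := da_ne A hA _
  have hU : A i j * da A (i.val + 1) = ba A i.val * A ((i.val + 1 : ℕ) : Fin (n + 2)) j := by
    have hci : ((i.val : ℕ) : Fin (n + 2)) = i := Fin.cast_val_eq_self i
    rcases eq_or_lt_of_le (by rw [Fin.lt_def] at hij'; omega : i.val + 1 ≤ j.val) with h | h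
    · have hj : j = ((i.val + 1 : ℕ) : Fin (n + 2)) := by
        apply Fin.ext; rw [Fin.val_cast_of_lt (by omega)]; omega
      rw [hj]
      show A i _ * _ = ba A i.val * da A (i.val + 1)
      have : A i ((i.val + 1 : ℕ) : Fin (n + 2)) = ba A i.val := by
        rw [ba, hci]
      rw [this]
    · have hcond := hA.2.1 i ((i.val + 1 : ℕ) : Fin (n + 2)) j
        (by rw [Fin.lt_def, Fin.val_cast_of_lt (by omega)]; omega)
        (by rw [Fin.lt_def, Fin.val_cast_of_lt (by omega)]; omega)
      have hik : A i ((i.val + 1 : ℕ) : Fin (n + 2)) = ba A i.val := by rw [ba, hci]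
      have hkk : A ((i.val + 1 : ℕ) : Fin (n + 2)) ((i.val + 1 : ℕ) : Fin (n + 2))
          = da A (i.val + 1) := rfl
      rw [hcond, hik, hkk]
      field_simp
  rw [Mm, if_pos hiv]
  have hcast : ((i.val + 1 : ℕ) : Fin (n + 2)) = i + 1 := by
    push_cast [Fin.cast_val_eq_self]
    ring
  rw [hcast] at hU ⊢
  field_simp
  linear_combination hU

lemma Mm_diag_last : Mm A (Fin.last (n + 1)) (Fin.last (n + 1)) = da A (n + 1) := by
  rw [Mm, if_neg (by simp)]
  rw [da, Fin.natCast_eq_last]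

lemma Mm_diag (hA : InvCyclic A) (i : Fin (n + 1)) :
    Mm A i.castSucc i.castSucc
      = da A i.val * ((∏ t ∈ range (n + 2), da A t - ∏ t ∈ range (n + 2), ba A t)
          / ∏ t ∈ range (n + 2), da A t) := by
  have hk := key A hA i.val (by omega)
  have hD : (∏ t ∈ range (n + 2), da A t) ≠ 0 := prod_da_ne A hA _
  have hd1 : da A (i.val + 1) ≠ 0 := da_ne A hA _
  have hv : (i.castSucc : Fin (n + 2)).val = i.val := rfl
  have hci : ((i.val : ℕ) : Fin (n + 2)) = i.castSucc := by
    apply Fin.ext; rw [Fin.val_cast_of_lt (by omega)]; rfl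
  rw [Mm, if_pos (by rw [hv]; omega)]
  rw [hv]
  have hAcc : A i.castSucc i.castSucc = da A i.val := by rw [da, hci]
  rw [hci] at hk
  have hs : ((i.val + 1 : ℕ) : Fin (n + 2)) = i.succ := by
    apply Fin.ext; rw [Fin.val_cast_of_lt (by omega)]; simp
  rw [hs] at hk ⊢
  rw [hAcc]
  field_simp
  linear_combination (-1 : ℝ) * hk

end ICP

theorem stmt0' {n : ℕ} (A : Matrix (Fin (n + 2)) (Fin (n + 2)) ℝ) (hA : InvCyclic A) :
    A.det = ((∏ i, A i i) - ∏ i : Fin (n + 2), A i (i + 1)) ^ (n + 1)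
      / (∏ i, A i i) ^ n := by
  classical
  set D := ∏ t ∈ Finset.range (n + 2), ICP.da A t with hDdef
  set C := ∏ t ∈ Finset.range (n + 2), ICP.ba A t with hCdef
  have hD : D ≠ 0 := ICP.prod_da_ne A hA _
  have hdiag : (∏ i, A i i) = D := by
    rw [hDdef, ← Fin.prod_univ_eq_prod_range]
    apply Finset.prod_congr rfl
    intro i _
    rw [ICP.da, Fin.cast_val_eq_self]
  have hcyc : (∏ i : Fin (n + 2), A i (i + 1)) = C := by
    rw [hCdef, ← Fin.prod_univ_eq_prod_range]
    apply Finset.prod_congr rfl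
    intro i _
    rw [ICP.ba, Fin.cast_val_eq_self]
    congr 1
  have h1 : A.det = (ICP.Mm A).det := by
    rw [← ICP.seq_eq_Mm A, ICP.seq_det A (n + 1) le_rfl]
  rw [h1, Matrix.det_of_lowerTriangular _ (ICP.Mm_triangular A hA)]
  rw [Fin.prod_univ_castSucc]
  have h2 : ∀ i : Fin (n + 1), ICP.Mm A i.castSucc i.castSucc
      = ICP.da A i.val * ((D - C) / D) := fun i => ICP.Mm_diag A hA i
  rw [Finset.prod_congr rfl (fun i _ => h2 i), ICP.Mm_diag_last A]
  rw [Finset.prod_mul_distrib, Finset.prod_const, Finset.card_univ, Fintype.card_fin]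
  have h3 : (∏ i : Fin (n + 1), ICP.da A i.val) * ICP.da A (n + 1) = D := by
    rw [hDdef, Finset.prod_range_succ, Fin.prod_univ_eq_prod_range]
  rw [hdiag, hcyc]
  rw [show (∏ i : Fin (n + 1), ICP.da A (i.val)) * ((D - C) / D) ^ (n + 1) * ICP.da A (n + 1)
      = D * ((D - C) / D) ^ (n + 1) by rw [← h3]; ring]
  rw [div_pow]
  rw [pow_succ]
  field_simp
  ring

theorem stmt0 {n : ℕ} (A : Matrix (Fin (n + 2)) (Fin (n + 2)) ℝ) (hA : InvCyclic A) :
    A.det = (diagProd A - cycProd A) ^ (n + 1) / (diagProd A) ^ n := by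
  rw [diagProd, cycProd]
  exact stmt0' A hA
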